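/- Let Ω be a finite set with |Ω| = 9 and let G be a solvable subgroup of the symmetric group on Ω acting primitively on Ω. Then there exists a 3-element subset Δ of Ω whose pointwise stabilizer in G is trivial. -/

import Mathlib

open Pointwise

/-- A permutation group `(G, Ω)` is primitive if it is transitive and every block is trivial. -/
def IsPrimitivePermGroup (Ω : Type*) [Fintype Ω] (G : Subgroup (Equiv.Perm Ω)) : Prop :=
  MulAction.IsPretransitive G Ω ∧
    ∀ B : Set Ω, MulAction.IsBlock G B → MulAction.IsTrivialBlock B

private theorem dvd_nine {d : ℕ} (hd : d ∣ 9) : d = 1 ∨ d = 3 ∨ d = 9 := by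
  have h1 : d ≤ 9 := Nat.le_of_dvd (by norm_num) hd
  interval_cases d <;> revert hd <;> decide

/-- Lemma 2.7 (second part): if `(G, Ω)` is primitive solvable of degree 9, then some
3-element subset of `Ω` has trivial pointwise stabilizer in `G`. -/
theorem stmt_16 {Ω : Type*} [Fintype Ω] (G : Subgroup (Equiv.Perm Ω))
    (hsolv : IsSolvable G) (hprim : IsPrimitivePermGroup Ω G)
    (hcard : Fintype.card Ω = 9) :
    ∃ Δ : Set Ω, Δ.ncard = 3 ∧
      ∀ g : G, (∀ x ∈ Δ, (g : Equiv.Perm Ω) x = x) → g = 1 := by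
  classical
  obtain ⟨htrans, hblock⟩ := hprim
  have hΩnt : Nontrivial Ω := Fintype.one_lt_card_iff_nontrivial.mp (by omega)
  have hsmul : ∀ (h : G) (y : Ω), h • y = (h : Equiv.Perm Ω) y := fun _ _ => rfl
  -- a helper: an element of G fixing all points is 1
  have hfaithful : ∀ m : G, (∀ y : Ω, m • y = y) → m = 1 := by
    intro m hm
    have : (m : Equiv.Perm Ω) = 1 := Equiv.ext fun y => hm y
    exact OneMemClass.coe_eq_one.mp this
  obtain ⟨x₀, y₀, hxy⟩ := exists_pair_ne Ω
  obtain ⟨g₀, hg₀⟩ := htrans.exists_smul_eq x₀ y₀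
  have hg₀1 : g₀ ≠ 1 := by rintro rfl; rw [one_smul] at hg₀; exact hxy hg₀
  have hGnt : Nontrivial G := ⟨g₀, 1, hg₀1⟩
  -- N := last nontrivial term of the derived series; abelian normal nontrivial
  have hex := hsolv.solvable
  have hnbot : derivedSeries G (Nat.find hex) = ⊥ := Nat.find_spec hex
  have hn0 : Nat.find hex ≠ 0 := by
    intro h
    rw [h, derivedSeries_zero] at hnbot
    exact top_ne_bot hnbot
  set N : Subgroup G := derivedSeries G (Nat.find hex - 1) with hN
  have hNbot : N ≠ ⊥ := Nat.find_min hex (by omega)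
  have hNnormal : N.Normal := derivedSeries_normal G _
  have hcomm : ∀ a ∈ N, ∀ b ∈ N, a * b = b * a := by
    intro a ha b hb
    have hsucc : derivedSeries G (Nat.find hex) = ⁅N, N⁆ := by
      rw [hN, ← derivedSeries_succ]
      congr 1
      omega
    open scoped commutatorElement in
    have : ⁅a, b⁆ ∈ derivedSeries G (Nat.find hex) := by
      rw [hsucc]; exact Subgroup.commutator_mem_commutator ha hb
    rw [hnbot] at this
    exact commutatorElement_eq_one_iff_mul_comm.mp (Subgroup.mem_bot.mp this)
  -- N acts transitively
  have horbit : ∀ y : Ω, ∃ m ∈ N, m • x₀ = y := by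
    have hB := hblock (MulAction.orbit N x₀) (MulAction.IsBlock.orbit_of_normal x₀)
    rcases hB with hsmall | huniv
    · exfalso
      have hfix : ∀ m ∈ N, m • x₀ = x₀ := by
        intro m hm
        exact hsmall (MulAction.mem_orbit _ (⟨m, hm⟩ : N)) (MulAction.mem_orbit_self x₀)
      apply hNbot
      rw [Subgroup.eq_bot_iff_forall]
      intro m hm
      apply hfaithful
      intro y
      obtain ⟨g, hg⟩ := htrans.exists_smul_eq x₀ y
      have h1 : g⁻¹ * m * g ∈ N := by
        have := hNnormal.conj_mem m hm g⁻¹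
        simpa using this
      calc m • y = m • g • x₀ := by rw [hg]
        _ = g • (g⁻¹ * m * g) • x₀ := by
            rw [← mul_smul, ← mul_smul]; congr 1; group
        _ = g • x₀ := by rw [hfix _ h1]
        _ = y := hg
    · intro y
      have : y ∈ MulAction.orbit N x₀ := huniv ▸ Set.mem_univ y
      obtain ⟨⟨m, hm⟩, hmy⟩ := this
      exact ⟨m, hm, hmy⟩
  -- N acts freely
  have hfree : ∀ m ∈ N, m • x₀ = x₀ → m = 1 := by
    intro m hm hfix
    apply hfaithful
    intro y
    obtain ⟨k, hk, rfl⟩ := horbit y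
    rw [← mul_smul, hcomm m hm k hk, mul_smul, hfix]
  -- card N = 9
  have hcardN : Nat.card N = 9 := by
    have hbij : Function.Bijective (fun m : N => (m : G) • x₀) := by
      constructor
      · intro m₁ m₂ h
        simp only at h
        have hmem : (m₂ : G)⁻¹ * m₁ ∈ N := N.mul_mem (N.inv_mem m₂.2) m₁.2
        have : ((m₂ : G)⁻¹ * m₁) • x₀ = x₀ := by
          rw [mul_smul, h, ← mul_smul, inv_mul_cancel, one_smul]
        have := hfree _ hmem this
        have : (m₁ : G) = m₂ := by
          have h2 := congrArg (fun z => (m₂ : G) * z) this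
          simpa [mul_assoc] using h2
        exact Subtype.ext this
      · intro y
        obtain ⟨m, hm, h⟩ := horbit y
        exact ⟨⟨m, hm⟩, h⟩
    rw [Nat.card_eq_of_bijective _ hbij, Nat.card_eq_fintype_card, hcard]
  -- produce two generators a b of N
  obtain ⟨a, haN, ha1⟩ : ∃ a : G, a ∈ N ∧ a ≠ 1 := by
    by_contra h
    push_neg at h
    exact hNbot (Subgroup.eq_bot_iff_forall N |>.mpr fun x hx => h x hx)
  have hza : Subgroup.zpowers a ≤ N := Subgroup.zpowers_le.mpr haN
  have hdza : Nat.card (Subgroup.zpowers a) ∣ 9 :=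
    hcardN ▸ Subgroup.card_dvd_of_le hza
  have hza1 : Nat.card (Subgroup.zpowers a) ≠ 1 := by
    intro h
    rw [Subgroup.card_eq_one] at h
    exact ha1 (Subgroup.mem_bot.mp (h ▸ Subgroup.mem_zpowers a))
  obtain ⟨b, hbN, hb1, hab, hclosure⟩ :
      ∃ b : G, b ∈ N ∧ b ≠ 1 ∧ a ≠ b ∧ Subgroup.closure {a, b} = N := by
    rcases dvd_nine hdza with h | h | h
    · exact absurd h hza1
    · -- zpowers a has order 3; pick b outside
      obtain ⟨b, hbN, hbza⟩ : ∃ b ∈ N, b ∉ Subgroup.zpowers a := by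
        by_contra hcon
        push_neg at hcon
        have : N ≤ Subgroup.zpowers a := fun x hx => hcon x hx
        have := Subgroup.card_dvd_of_le this
        rw [hcardN, h] at this
        omega
      have hb1 : b ≠ 1 := fun hb => hbza (hb ▸ (Subgroup.zpowers a).one_mem)
      have hab : a ≠ b := fun hb => hbza (hb ▸ Subgroup.mem_zpowers a)
      refine ⟨b, hbN, hb1, hab, ?_⟩
      have hle : Subgroup.closure {a, b} ≤ N := by
        rw [Subgroup.closure_le]
        rintro c (rfl | rfl) <;> assumption
      have haH : a ∈ Subgroup.closure {a, b} :=
        Subgroup.subset_closure (Set.mem_insert a {b})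
      have hbH : b ∈ Subgroup.closure {a, b} :=
        Subgroup.subset_closure (Set.mem_insert_of_mem a rfl)
      have hzaH : Subgroup.zpowers a ≤ Subgroup.closure {a, b} :=
        Subgroup.zpowers_le.mpr haH
      have hdH : Nat.card (Subgroup.closure {a, b} : Subgroup G) ∣ 9 :=
        hcardN ▸ Subgroup.card_dvd_of_le hle
      have h3d : 3 ∣ Nat.card (Subgroup.closure {a, b} : Subgroup G) :=
        h ▸ Subgroup.card_dvd_of_le hzaH
      rcases dvd_nine hdH with h' | h' | h'
      · omega
      · exfalso
        have : Subgroup.zpowers a = Subgroup.closure {a, b} :=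
          Subgroup.eq_of_le_of_card_ge hzaH (by omega)
        exact hbza (this ▸ hbH)
      · exact Subgroup.eq_of_le_of_card_ge hle (by omega)
    · -- zpowers a = N; take b = a^2
      have hzaN : Subgroup.zpowers a = N :=
        Subgroup.eq_of_le_of_card_ge hza (by omega)
      have horder : orderOf a = 9 := by rw [← Nat.card_zpowers, h]
      have hb1 : a ^ 2 ≠ 1 := by
        intro hb
        have := orderOf_dvd_of_pow_eq_one hb
        rw [horder] at this
        omega
      have hab : a ≠ a ^ 2 := by
        intro hb
        apply hb1
        have : a * a = a * 1 := by rw [mul_one, ← sq, ← hb]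
        have := mul_left_cancel this
        rw [sq, this, mul_one]
      refine ⟨a ^ 2, N.pow_mem haN 2, hb1, hab, ?_⟩
      apply le_antisymm
      · rw [Subgroup.closure_le]
        rintro c (rfl | rfl)
        · exact haN
        · exact N.pow_mem haN 2
      · rw [← hzaN]
        exact Subgroup.zpowers_le.mpr (Subgroup.subset_closure (Set.mem_insert a _))
  -- the base
  have hax : a • x₀ ≠ x₀ := fun h => ha1 (hfree a haN h)
  have hbx : b • x₀ ≠ x₀ := fun h => hb1 (hfree b hbN h)
  have habx : a • x₀ ≠ b • x₀ := by
    intro h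
    apply hab
    have hmem : b⁻¹ * a ∈ N := N.mul_mem (N.inv_mem hbN) haN
    have hfix : (b⁻¹ * a) • x₀ = x₀ := by
      rw [mul_smul, h, ← mul_smul, inv_mul_cancel, one_smul]
    have := hfree _ hmem hfix
    have h2 := congrArg (fun z => b * z) this
    simpa [mul_assoc] using h2
  refine ⟨{x₀, a • x₀, b • x₀}, ?_, ?_⟩
  · rw [Set.ncard_insert_of_notMem (by simp [hax.symm, hbx.symm]),
      Set.ncard_pair habx]
  · intro g hg
    have hg0 : g • x₀ = x₀ := hg x₀ (Set.mem_insert _ _)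
    have hcom : ∀ c ∈ N, g • (c • x₀) = c • x₀ → g * c = c * g := by
      intro c hc hfixc
      have h1 : g * c * g⁻¹ ∈ N := hNnormal.conj_mem c hc g
      have hginv : g⁻¹ • x₀ = x₀ := by
        rw [inv_smul_eq_iff, hg0]
      have h2 : (g * c * g⁻¹) • x₀ = c • x₀ := by
        rw [mul_smul, mul_smul, hginv, hfixc]
      have hmem : c⁻¹ * (g * c * g⁻¹) ∈ N := N.mul_mem (N.inv_mem hc) h1
      have hfixm : (c⁻¹ * (g * c * g⁻¹)) • x₀ = x₀ := by
        rw [mul_smul, h2, ← mul_smul, inv_mul_cancel, one_smul]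
      have := hfree _ hmem hfixm
      have h3 : g * c * g⁻¹ = c := by
        have h4 := congrArg (fun z => c * z) this
        simpa [mul_assoc] using h4
      calc g * c = (g * c * g⁻¹) * g := by group
        _ = c * g := by rw [h3]
    have hga : g * a = a * g := by
      apply hcom a haN
      rw [hsmul, hg (a • x₀) (Set.mem_insert_of_mem _ (Set.mem_insert _ _))]
    have hgb : g * b = b * g := by
      apply hcom b hbN
      rw [hsmul, hg (b • x₀) (Set.mem_insert_of_mem _ (Set.mem_insert_of_mem _ rfl))]
    have hcent : N ≤ Subgroup.centralizer {g} := by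
      rw [← hclosure, Subgroup.closure_le]
      rintro c (rfl | rfl)
      · exact Subgroup.mem_centralizer_iff.mpr (by rintro h rfl; exact hga)
      · exact Subgroup.mem_centralizer_iff.mpr (by rintro h rfl; exact hgb)
    apply hfaithful
    intro y
    obtain ⟨m, hm, rfl⟩ := horbit y
    have hgm : g * m = m * g := Subgroup.mem_centralizer_iff.mp (hcent hm) g rfl
    rw [← mul_smul, hgm, mul_smul, hg0]
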